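/- Let S and S' be c-colorable vertex sets in a graph G with |S| = |S'| = k+1. Then there is a TAR(k)-reconfiguration sequence between S and S' (each step adds or removes one vertex, all intermediate sets are c-colorable of size at least k) if and only if there is a TJ-reconfiguration sequence between S and S' (each step exchanges one vertex of the set for one vertex outside, all intermediate sets are c-colorable of size k+1). -/

import Mathlib

open Finset

variable {V : Type*}

/-- `S` is a `c`-colorable vertex set in `G`. -/
def ColSet (G : SimpleGraph V) (c : ℕ) (S : Finset V) : Prop :=
  (G.induce (S : Set V)).Colorable c

/-- One TAR(k) step between `c`-colorable sets. -/
def TARStep (G : SimpleGraph V) (c k : ℕ) [DecidableEq V] (A B : Finset V) : Prop :=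
  ColSet G c A ∧ ColSet G c B ∧ k ≤ A.card ∧ k ≤ B.card ∧ (symmDiff A B).card = 1

/-- One TJ step between `c`-colorable sets. -/
def TJStep (G : SimpleGraph V) (c : ℕ) [DecidableEq V] (A B : Finset V) : Prop :=
  ColSet G c A ∧ ColSet G c B ∧ (A \ B).card = 1 ∧ (B \ A).card = 1

/-- `l` is a TAR(k)-reconfiguration sequence from `S` to `S'`. -/
def TARSeq (G : SimpleGraph V) (c k : ℕ) [DecidableEq V] (S S' : Finset V)
    (l : List (Finset V)) : Prop :=
  l.head? = some S ∧ l.getLast? = some S' ∧ l.Chain' (TARStep G c k)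

def TJSeq (G : SimpleGraph V) (c : ℕ) [DecidableEq V] (S S' : Finset V)
    (l : List (Finset V)) : Prop :=
  l.head? = some S ∧ l.getLast? = some S' ∧ l.Chain' (TJStep G c)

def TARReach (G : SimpleGraph V) (c k : ℕ) [DecidableEq V] (S S' : Finset V) : Prop :=
  ∃ l, TARSeq G c k S S' l

def TJReach (G : SimpleGraph V) (c : ℕ) [DecidableEq V] (S S' : Finset V) : Prop :=
  ∃ l, TJSeq G c S S' l

/-- Length of a shortest TAR(k)-sequence (number of steps), `⊤` if none exists. -/
noncomputable def TARDist (G : SimpleGraph V) (c k : ℕ) [DecidableEq V]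
    (S S' : Finset V) : ℕ∞ :=
  sInf {n : ℕ∞ | ∃ l, TARSeq G c k S S' l ∧ (l.length : ℕ∞) = n + 1}

noncomputable def TJDist (G : SimpleGraph V) (c : ℕ) [DecidableEq V]
    (S S' : Finset V) : ℕ∞ :=
  sInf {n : ℕ∞ | ∃ l, TJSeq G c S S' l ∧ (l.length : ℕ∞) = n + 1}

/-- `S` is a maximal `c`-colorable set among subsets of `U`, of size exactly `k`
(`S` is "locked" in `G[U]`). -/
def LockedIn (G : SimpleGraph V) (c k : ℕ) (U S : Finset V) : Prop :=
  S.card = k ∧ ColSet G c S ∧ S ⊆ U ∧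
    ∀ T ⊆ U, ColSet G c T → S ⊆ T → T = S

/-- `S` is locked in `G` itself. -/
def Locked [Fintype V] (G : SimpleGraph V) (c k : ℕ) (S : Finset V) : Prop :=
  LockedIn G c k Finset.univ S

/-- `G` is an interval graph. -/
def IsIntervalGraph (G : SimpleGraph V) : Prop :=
  ∃ l r : V → ℝ, (∀ v, l v ≤ r v) ∧
    ∀ u v, G.Adj u v ↔ u ≠ v ∧ max (l u) (l v) ≤ min (r u) (r v)

/-- `G` is perfect: every induced subgraph has chromatic number equal to its
clique number, stated via the colorability/clique-free characterization. -/
def IsPerfect (G : SimpleGraph V) : Prop :=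
  ∀ (S : Set V) (c : ℕ), (G.induce S).Colorable c ↔ (G.induce S).CliqueFree (c + 1)
private lemma colset_mono {G : SimpleGraph V} {c : ℕ} {S T : Finset V} (h : T ⊆ S)
    (hS : ColSet G c S) : ColSet G c T := by
  refine SimpleGraph.Colorable.of_hom (RelEmbedding.toRelHom ?_) hS
  refine ⟨⟨fun v => ⟨v.1, h v.2⟩, ?_⟩, ?_⟩
  · intro a b hab
    exact Subtype.ext (congrArg Subtype.val hab :)
  · intro a b
    rfl

private lemma rtg_of_seq {α : Type*} (R : α → α → Prop) :
    ∀ (l : List α) (S S' : α), l.head? = some S → l.getLast? = some S' →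
      l.Chain' R → Relation.ReflTransGen R S S'
  | [], S, S', h, _, _ => by simp at h
  | [a], S, S', h, h', _ => by
      simp only [List.head?_cons, Option.some.injEq] at h
      simp only [List.getLast?_singleton, Option.some.injEq] at h'
      subst h; subst h'; exact Relation.ReflTransGen.refl
  | a :: b :: t, S, S', h, h', hc => by
      simp only [List.head?_cons, Option.some.injEq] at h
      subst h
      rw [List.Chain', List.isChain_cons_cons] at hc
      exact Relation.ReflTransGen.head hc.1
        (rtg_of_seq R (b :: t) b S' rfl (by rw [List.getLast?_cons_cons] at h'; exact h') hc.2)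

private lemma seq_snoc {α : Type*} {R : α → α → Prop} {S T T' : α}
    (h : ∃ l : List α, l.head? = some S ∧ l.getLast? = some T ∧ l.Chain' R) (hR : R T T') :
    ∃ l : List α, l.head? = some S ∧ l.getLast? = some T' ∧ l.Chain' R := by
  obtain ⟨l, h1, h2, h3⟩ := h
  refine ⟨l ++ [T'], ?_, ?_, ?_⟩
  · cases l with
    | nil => simp at h1
    | cons a t => simpa using h1
  · simp [List.getLast?_concat]
  · rw [List.Chain', List.isChain_append]
    refine ⟨h3, List.isChain_singleton _, ?_⟩
    intro x hx y hy
    simp only [List.head?_cons, Option.mem_def, Option.some.injEq] at hy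
    rw [h2] at hx
    cases hx; cases hy; exact hR

private lemma rtg_to_seq {α : Type*} {R : α → α → Prop} {S S' : α}
    (h : Relation.ReflTransGen R S S') :
    ∃ l : List α, l.head? = some S ∧ l.getLast? = some S' ∧ l.Chain' R := by
  induction h with
  | refl => exact ⟨[S], rfl, rfl, List.isChain_singleton _⟩
  | tail _ hR ih => exact seq_snoc ih hR

private lemma tj_to_tar {G : SimpleGraph V} [DecidableEq V] {c k : ℕ} {S T : Finset V}
    (h : Relation.ReflTransGen (TJStep G c) S T) (hcard : S.card = k + 1) :
    T.card = k + 1 ∧ Relation.ReflTransGen (TARStep G c k) S T := by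
  induction h with
  | refl => exact ⟨hcard, .refl⟩
  | @tail A B hSA hR ih =>
    obtain ⟨hcA, hreach⟩ := ih
    obtain ⟨hcolA, hcolB, h1, h2⟩ := hR
    have hAB := Finset.card_sdiff_add_card_inter A B
    have hBA := Finset.card_sdiff_add_card_inter B A
    rw [Finset.inter_comm B A] at hBA
    have hcB : B.card = k + 1 := by omega
    have hinter : (A ∩ B).card = k := by omega
    have hcolI : ColSet G c (A ∩ B) := colset_mono Finset.inter_subset_left hcolA
    have e1 : symmDiff A (A ∩ B) = A \ B := by
      ext x
      simp only [symmDiff_def, Finset.sup_eq_union, Finset.mem_union, Finset.mem_sdiff,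
        Finset.mem_inter]
      tauto
    have e2 : symmDiff (A ∩ B) B = B \ A := by
      ext x
      simp only [symmDiff_def, Finset.sup_eq_union, Finset.mem_union, Finset.mem_sdiff,
        Finset.mem_inter]
      tauto
    refine ⟨hcB, Relation.ReflTransGen.tail (Relation.ReflTransGen.tail (c := A ∩ B) hreach ?_) ?_⟩
    · exact ⟨hcolA, hcolI, by omega, by omega, by rw [e1]; exact h1⟩
    · exact ⟨hcolI, hcolB, by omega, by omega, by rw [e2]; exact h2⟩

private lemma tar_to_tj {G : SimpleGraph V} [DecidableEq V] {c k : ℕ} {S T : Finset V}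
    (h : Relation.ReflTransGen (TARStep G c k) S T) (hS : ColSet G c S)
    (hcard : S.card = k + 1) :
    ∃ C : Finset V, C.card = k + 1 ∧ ColSet G c C ∧
      Relation.ReflTransGen (TJStep G c) S C ∧ (T ⊆ C ∨ C ⊆ T) := by
  induction h with
  | refl => exact ⟨S, hcard, hS, .refl, Or.inl le_rfl⟩
  | @tail A B hSA hR ih =>
    obtain ⟨C, hCcard, hCcol, hCreach, hCsub⟩ := ih
    obtain ⟨hcolA, hcolB, hkA, hkB, hsd⟩ := hR
    have hsplit : (A \ B).card + (B \ A).card = 1 := by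
      rw [symmDiff_def, Finset.sup_eq_union,
        Finset.card_union_of_disjoint disjoint_sdiff_sdiff] at hsd
      exact hsd
    rcases Nat.le_one_iff_eq_zero_or_eq_one.mp (by omega : (A \ B).card ≤ 1) with hAB0 | hAB1
    · -- addition case : A ⊆ B, (B \ A).card = 1
      have hABsub : A ⊆ B := by
        rw [← Finset.sdiff_eq_empty_iff_subset, ← Finset.card_eq_zero]; exact hAB0
      have hBA1 : (B \ A).card = 1 := by omega
      obtain ⟨v, hv⟩ := Finset.card_eq_one.mp hBA1
      have hvB : v ∈ B := (Finset.mem_sdiff.mp (hv ▸ Finset.mem_singleton_self v)).1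
      have hvA : v ∉ A := (Finset.mem_sdiff.mp (hv ▸ Finset.mem_singleton_self v)).2
      have hBcard : B.card = A.card + 1 := by
        have := Finset.card_sdiff_add_card_eq_card hABsub
        omega
      rcases hCsub with hAC | hCA
      · -- A ⊆ C
        by_cases hvC : v ∈ C
        · -- B ⊆ C
          refine ⟨C, hCcard, hCcol, hCreach, Or.inl ?_⟩
          intro x hx
          by_cases hxA : x ∈ A
          · exact hAC hxA
          · have : x ∈ B \ A := Finset.mem_sdiff.mpr ⟨hx, hxA⟩
            rw [hv, Finset.mem_singleton] at this
            exact this ▸ hvC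
        · by_cases hAk1 : A.card = k + 1
          · have : A = C := Finset.eq_of_subset_of_card_le hAC (by omega)
            exact ⟨C, hCcard, hCcol, hCreach, Or.inr (this ▸ hABsub)⟩
          · have hAk : A.card = k := by
              have := Finset.card_le_card hAC; omega
            have hBk1 : B.card = k + 1 := by omega
            -- C ∩ B ⊇ A, v ∉ C; show (C \ B).card = 1, (B \ C).card = 1 or C = B
            have hACB : A ⊆ C ∩ B := Finset.subset_inter hAC hABsub
            have hCBle : (C ∩ B).card ≤ k + 1 := hCcard ▸ Finset.card_le_card Finset.inter_subset_left
            by_cases hCBk1 : (C ∩ B).card = k + 1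
            · -- C ⊆ B hence C = B
              have hCB : C ⊆ B := by
                have : C ∩ B = C := Finset.eq_of_subset_of_card_le Finset.inter_subset_left
                  (by omega)
                exact this ▸ Finset.inter_subset_right
              have : C = B := Finset.eq_of_subset_of_card_le hCB (by omega)
              exact ⟨C, hCcard, hCcol, hCreach, Or.inr this.le⟩
            · have hCBk : (C ∩ B).card = k := by
                have := Finset.card_le_card hACB; omega
              have hCB1 : (C \ B).card = 1 := by
                have := Finset.card_sdiff_add_card_inter C B; omega
              have hBC1 : (B \ C).card = 1 := by
                have := Finset.card_sdiff_add_card_inter B C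
                rw [Finset.inter_comm B C] at this; omega
              exact ⟨B, hBk1, hcolB, hCreach.tail ⟨hCcol, hcolB, hCB1, hBC1⟩,
                Or.inl le_rfl⟩
      · -- C ⊆ A ⊆ B
        exact ⟨C, hCcard, hCcol, hCreach, Or.inr (hCA.trans hABsub)⟩
    · -- removal case : B ⊆ A, (A \ B).card = 1
      have hBA0 : (B \ A).card = 0 := by omega
      have hBAsub : B ⊆ A := by
        rw [← Finset.sdiff_eq_empty_iff_subset, ← Finset.card_eq_zero]; exact hBA0
      obtain ⟨v, hv⟩ := Finset.card_eq_one.mp hAB1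
      have hvA : v ∈ A := (Finset.mem_sdiff.mp (hv ▸ Finset.mem_singleton_self v)).1
      have hvB : v ∉ B := (Finset.mem_sdiff.mp (hv ▸ Finset.mem_singleton_self v)).2
      have hAcard : A.card = B.card + 1 := by
        have := Finset.card_sdiff_add_card_eq_card hBAsub
        omega
      rcases hCsub with hAC | hCA
      · exact ⟨C, hCcard, hCcol, hCreach, Or.inl (hBAsub.trans hAC)⟩
      · by_cases hvC : v ∈ C
        · by_cases hBk : B.card = k
          · -- then A.card = k+1 = C.card, so C = A, B ⊆ C
            have : C = A := Finset.eq_of_subset_of_card_le hCA (by omega)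
            exact ⟨C, hCcard, hCcol, hCreach, Or.inl (this ▸ hBAsub)⟩
          · have hBk1 : k + 1 ≤ B.card := by omega
            have herB : C.erase v ⊆ B := by
              intro x hx
              obtain ⟨hxv, hxC⟩ := Finset.mem_erase.mp hx
              by_contra hxB
              have : x ∈ A \ B := Finset.mem_sdiff.mpr ⟨hCA hxC, hxB⟩
              rw [hv, Finset.mem_singleton] at this
              exact hxv this
            have hercard : (C.erase v).card = k := by
              rw [Finset.card_erase_of_mem hvC, hCcard]; omega
            have hw : (B \ C.erase v).Nonempty := by
              rw [← Finset.card_pos]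
              have := Finset.card_sdiff_add_card_eq_card herB
              omega
            obtain ⟨w, hwmem⟩ := hw
            obtain ⟨hwB, hwer⟩ := Finset.mem_sdiff.mp hwmem
            have hwv : w ≠ v := fun h => hvB (h ▸ hwB)
            have hwC : w ∉ C := fun h => hwer (Finset.mem_erase.mpr ⟨hwv, h⟩)
            set C' := insert w (C.erase v) with hC'
            have hC'B : C' ⊆ B := Finset.insert_subset hwB herB
            have hC'card : C'.card = k + 1 := by
              rw [hC', Finset.card_insert_of_notMem hwer, hercard]
            have hC'col : ColSet G c C' := colset_mono hC'B hcolB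
            have hd1 : C \ C' = {v} := by
              ext x
              simp only [hC', Finset.mem_sdiff, Finset.mem_insert, Finset.mem_erase,
                Finset.mem_singleton, not_or, not_and]
              constructor
              · rintro ⟨hxC, _, hxv⟩
                by_contra h
                exact (hxv h) hxC
              · rintro rfl
                exact ⟨hvC, fun h => hwv h.symm, fun h => absurd rfl h⟩
            have hd2 : C' \ C = {w} := by
              ext x
              simp only [hC', Finset.mem_sdiff, Finset.mem_insert, Finset.mem_erase,
                Finset.mem_singleton]
              constructor
              · rintro ⟨hx | ⟨_, hxC⟩, hxnC⟩
                · exact hx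
                · exact absurd hxC hxnC
              · rintro rfl
                exact ⟨Or.inl rfl, hwC⟩
            refine ⟨C', hC'card, hC'col, hCreach.tail ⟨hCcol, hC'col, ?_, ?_⟩, Or.inr hC'B⟩
            · rw [hd1]; exact Finset.card_singleton v
            · rw [hd2]; exact Finset.card_singleton w
        · -- v ∉ C : C ⊆ B
          refine ⟨C, hCcard, hCcol, hCreach, Or.inr ?_⟩
          intro x hx
          by_contra hxB
          have : x ∈ A \ B := Finset.mem_sdiff.mpr ⟨hCA hx, hxB⟩
          rw [hv, Finset.mem_singleton] at this
          exact hvC (this ▸ hx)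

theorem tar_reach_iff_tj_reach {V : Type*} [DecidableEq V] (G : SimpleGraph V)
    (c k : ℕ) (S S' : Finset V) (hS : ColSet G c S) (hS' : ColSet G c S')
    (hcard : S.card = k + 1) (hcard' : S'.card = k + 1) :
    TARReach G c k S S' ↔ TJReach G c S S' := by
  constructor
  · rintro ⟨l, h1, h2, h3⟩
    obtain ⟨C, hCcard, hCcol, hCreach, hCsub⟩ :=
      tar_to_tj (rtg_of_seq _ l S S' h1 h2 h3) hS hcard
    have hCS' : C = S' := by
      rcases hCsub with h | h
      · exact (Finset.eq_of_subset_of_card_le h (by omega)).symm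
      · exact Finset.eq_of_subset_of_card_le h (by omega)
    obtain ⟨l', a, b, cc⟩ := rtg_to_seq (hCS' ▸ hCreach)
    exact ⟨l', a, b, cc⟩
  · rintro ⟨l, h1, h2, h3⟩
    obtain ⟨l', a, b, cc⟩ := rtg_to_seq (tj_to_tar (rtg_of_seq _ l S S' h1 h2 h3) hcard).2
    exact ⟨l', a, b, cc⟩
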